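/- The subgroup of the group of K-linear automorphisms of the space of 3×3 matrices over K generated by the conjugation maps In(p₁) : x ↦ p₁xp₁⁻¹ and In(p₂) : x ↦ p₂xp₂⁻¹ is abelian of order 9, with both generators of order exactly 3 (i.e. it is isomorphic to ℤ₃ × ℤ₃). -/

import Mathlib

/-- The cyclic permutation matrix `p₁` with rows `(0,0,1), (1,0,0), (0,1,0)`. -/
def P1 (K : Type*) [Field K] : Matrix (Fin 3) (Fin 3) K :=
  !![0, 0, 1; 1, 0, 0; 0, 1, 0]

/-- The diagonal matrix `p₂ = diag(1, ω, ω²)`. -/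
def P2 (K : Type*) [Field K] (ω : K) : Matrix (Fin 3) (Fin 3) K :=
  !![1, 0, 0; 0, ω, 0; 0, 0, ω ^ 2]

/-- The conjugation map `In(p) : x ↦ p·x·p⁻¹` as a `K`-linear automorphism of the
space of `3 × 3` matrices over `K`. -/
noncomputable def conjLin {K : Type*} [Field K] (p : Matrix (Fin 3) (Fin 3) K)
    [Invertible p] : Matrix (Fin 3) (Fin 3) K ≃ₗ[K] Matrix (Fin 3) (Fin 3) K where
  toFun x := p * x * ⅟p
  invFun x := ⅟p * x * p
  map_add' x y := by simp only [mul_add, add_mul]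
  map_smul' c x := by
    simp only [RingHom.id_apply, mul_smul_comm, smul_mul_assoc]
  left_inv x := by
    simp only [← mul_assoc]
    rw [invOf_mul_self, one_mul, mul_assoc, invOf_mul_self, mul_one]
  right_inv x := by
    simp only [← mul_assoc]
    rw [mul_invOf_self, one_mul, mul_assoc, mul_invOf_self, mul_one]

section Aux

variable {K : Type*} [Field K]

/-- inverse of `P1` -/
def Q1 (K : Type*) [Field K] : Matrix (Fin 3) (Fin 3) K :=
  !![0, 1, 0; 0, 0, 1; 1, 0, 0]

/-- inverse of `P2` -/
def Q2 (K : Type*) [Field K] (ω : K) : Matrix (Fin 3) (Fin 3) K :=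
  !![1, 0, 0; 0, ω ^ 2, 0; 0, 0, ω]

lemma P1_mul_Q1 : P1 K * Q1 K = 1 := by
  rw [P1, Q1, Matrix.mul_fin_three, Matrix.one_fin_three]; norm_num

lemma P2_mul_Q2 {ω : K} (hω3 : ω ^ 3 = 1) : P2 K ω * Q2 K ω = 1 := by
  rw [P2, Q2, Matrix.mul_fin_three, Matrix.one_fin_three]
  ring_nf; rw [hω3]

lemma invOf_P1 [Invertible (P1 K)] : ⅟(P1 K) = Q1 K :=
  invOf_eq_right_inv P1_mul_Q1

lemma invOf_P2 {ω : K} (hω3 : ω ^ 3 = 1) [Invertible (P2 K ω)] : ⅟(P2 K ω) = Q2 K ω :=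
  invOf_eq_right_inv (P2_mul_Q2 hω3)

lemma triple_assoc (p q u v x : Matrix (Fin 3) (Fin 3) K) :
    p * (q * x * v) * u = (p * q) * x * (v * u) := by noncomm_ring

lemma P1_cube : P1 K * P1 K * P1 K = 1 := by
  rw [P1, Matrix.mul_fin_three, Matrix.mul_fin_three, Matrix.one_fin_three]; norm_num

lemma Q1_cube : Q1 K * (Q1 K * Q1 K) = 1 := by
  rw [Q1, Matrix.mul_fin_three, Matrix.mul_fin_three, Matrix.one_fin_three]; norm_num

lemma P2_cube {ω : K} (hω3 : ω ^ 3 = 1) : P2 K ω * P2 K ω * P2 K ω = 1 := by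
  have hω6 : ω ^ 6 = 1 := by rw [(by ring : ω ^ 6 = (ω ^ 3) ^ 2), hω3]; ring
  rw [P2, Matrix.mul_fin_three, Matrix.mul_fin_three, Matrix.one_fin_three]
  ring_nf; rw [hω3, hω6]

lemma Q2_cube {ω : K} (hω3 : ω ^ 3 = 1) : Q2 K ω * (Q2 K ω * Q2 K ω) = 1 := by
  have hω6 : ω ^ 6 = 1 := by rw [(by ring : ω ^ 6 = (ω ^ 3) ^ 2), hω3]; ring
  rw [Q2, Matrix.mul_fin_three, Matrix.mul_fin_three, Matrix.one_fin_three]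
  ring_nf; rw [hω3, hω6]

lemma P1P2_smul {ω : K} (hω3 : ω ^ 3 = 1) :
    P1 K * P2 K ω = ω ^ 2 • (P2 K ω * P1 K) := by
  have hω4 : ω ^ 4 = ω := by rw [(by ring : ω ^ 4 = ω ^ 3 * ω), hω3]; ring
  rw [P1, P2, Matrix.mul_fin_three, Matrix.mul_fin_three]
  simp only [Matrix.smul_of, Matrix.smul_cons, Matrix.smul_mat_empty, Matrix.smul_empty,
    Matrix.smul_vec3, smul_eq_mul]
  ring_nf
  rw [hω3, hω4]

lemma Q2Q1_smul {ω : K} (hω3 : ω ^ 3 = 1) :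
    Q2 K ω * Q1 K = ω • (Q1 K * Q2 K ω) := by
  have hω4 : ω ^ 4 = ω := by rw [(by ring : ω ^ 4 = ω ^ 3 * ω), hω3]; ring
  rw [Q1, Q2, Matrix.mul_fin_three, Matrix.mul_fin_three]
  simp only [Matrix.smul_of, Matrix.smul_cons, Matrix.smul_mat_empty, Matrix.smul_empty,
    Matrix.smul_vec3, smul_eq_mul]
  ring_nf
  rw [hω3]

/-- elementary matrix `E₀₁` -/
def E01 (K : Type*) [Field K] : Matrix (Fin 3) (Fin 3) K :=
  !![0, 1, 0; 0, 0, 0; 0, 0, 0]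

/-- elementary matrix `E₁₂` -/
def E12 (K : Type*) [Field K] : Matrix (Fin 3) (Fin 3) K :=
  !![0, 0, 0; 0, 0, 1; 0, 0, 0]

/-- elementary matrix `E₂₀` -/
def E20 (K : Type*) [Field K] : Matrix (Fin 3) (Fin 3) K :=
  !![0, 0, 0; 0, 0, 0; 1, 0, 0]

lemma A_E01 [Invertible (P1 K)] : conjLin (P1 K) (E01 K) = E12 K := by
  show P1 K * E01 K * ⅟(P1 K) = E12 K
  rw [invOf_P1, P1, Q1, E01, E12, Matrix.mul_fin_three, Matrix.mul_fin_three]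
  norm_num

lemma A_E12 [Invertible (P1 K)] : conjLin (P1 K) (E12 K) = E20 K := by
  show P1 K * E12 K * ⅟(P1 K) = E20 K
  rw [invOf_P1, P1, Q1, E12, E20, Matrix.mul_fin_three, Matrix.mul_fin_three]
  norm_num

lemma B_E01 {ω : K} (hω3 : ω ^ 3 = 1) [Invertible (P2 K ω)] :
    conjLin (P2 K ω) (E01 K) = ω ^ 2 • E01 K := by
  show P2 K ω * E01 K * ⅟(P2 K ω) = ω ^ 2 • E01 K
  rw [invOf_P2 hω3, P2, Q2, E01, Matrix.mul_fin_three, Matrix.mul_fin_three]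
  simp only [Matrix.smul_of, Matrix.smul_cons, Matrix.smul_mat_empty, Matrix.smul_empty,
    Matrix.smul_vec3, smul_eq_mul]
  ring_nf

end Aux

set_option maxHeartbeats 1000000 in
/-- The subgroup of the `K`-linear automorphism group of `M₃(K)` generated by the
conjugation maps `In(p₁)` and `In(p₂)` is abelian of order `9`, with both generators of
order exactly `3`; i.e. it is isomorphic to `ℤ₃ × ℤ₃`. -/
theorem conj_subgroup_Z3_Z3 (K : Type*) [Field K] [CharZero K]
    (ω : K) (hω1 : ω ≠ 1) (hω3 : ω ^ 3 = 1)
    [Invertible (P1 K)] [Invertible (P2 K ω)] :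
    (∀ a ∈ Subgroup.closure {conjLin (P1 K), conjLin (P2 K ω)},
      ∀ b ∈ Subgroup.closure {conjLin (P1 K), conjLin (P2 K ω)}, a * b = b * a) ∧
    Nat.card (Subgroup.closure {conjLin (P1 K), conjLin (P2 K ω)}) = 9 ∧
    orderOf (conjLin (P1 K)) = 3 ∧ orderOf (conjLin (P2 K ω)) = 3 := by
  set A := conjLin (P1 K) with hAdef
  set B := conjLin (P2 K ω) with hBdef
  set H := Subgroup.closure {A, B} with hHdef
  have p3 : ∀ g : Matrix (Fin 3) (Fin 3) K ≃ₗ[K] Matrix (Fin 3) (Fin 3) K,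
      g ^ 3 = g * g * g := fun g => by
    show g ^ (1 + 1 + 1) = g * g * g
    rw [pow_succ, pow_succ, pow_one]
  -- A^3 = 1
  have hA3 : A ^ 3 = 1 := by
    rw [p3]
    refine LinearEquiv.ext fun x => ?_
    show P1 K * (P1 K * (P1 K * x * ⅟(P1 K)) * ⅟(P1 K)) * ⅟(P1 K) = x
    rw [invOf_P1, triple_assoc, triple_assoc, P1_cube, Q1_cube, one_mul, mul_one]
  have hB3 : B ^ 3 = 1 := by
    rw [p3]
    refine LinearEquiv.ext fun x => ?_
    show P2 K ω * (P2 K ω * (P2 K ω * x * ⅟(P2 K ω)) * ⅟(P2 K ω)) * ⅟(P2 K ω) = x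
    rw [invOf_P2 hω3, triple_assoc, triple_assoc, P2_cube hω3, Q2_cube hω3,
      one_mul, mul_one]
  -- A and B commute
  have hAB : A * B = B * A := by
    refine LinearEquiv.ext fun x => ?_
    show P1 K * (P2 K ω * x * ⅟(P2 K ω)) * ⅟(P1 K) =
      P2 K ω * (P1 K * x * ⅟(P1 K)) * ⅟(P2 K ω)
    rw [invOf_P1, invOf_P2 hω3, triple_assoc, triple_assoc, P1P2_smul hω3,
      Q2Q1_smul hω3, smul_mul_assoc, smul_mul_assoc, mul_smul_comm, smul_smul,
      (by linear_combination hω3 : ω ^ 2 * ω = 1), one_smul]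
  have hc : Commute A B := hAB
  -- the key injectivity computation
  have key' : ∀ m k : ℕ, m < 3 → k < 3 → A ^ m * B ^ k = 1 → m = 0 ∧ k = 0 := by
    intro m k hm hk h
    interval_cases m <;> interval_cases k <;>
        simp only [pow_zero, pow_one, pow_two, one_mul, mul_one] at h
    · exact ⟨rfl, rfl⟩
    · -- (0,1) : B = 1
      exfalso
      have h0 : B (E01 K) = E01 K := by rw [h]; rfl
      rw [B_E01 hω3] at h0
      have hent := Matrix.ext_iff.2 h0 0 1
      simp [E01, Matrix.smul_apply, smul_eq_mul] at hent
      rcases hent with h1 | h1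
      · exact hω1 h1
      · rw [h1] at hω3; norm_num at hω3
    · -- (0,2) : B*B = 1
      exfalso
      have h0 : B (B (E01 K)) = E01 K := by
        rw [show B (B (E01 K)) = (B * B) (E01 K) from rfl, h]; rfl
      simp only [hBdef, B_E01 hω3, map_smul] at h0
      rw [smul_smul, (show (ω ^ 2 * ω ^ 2 : K) = ω by linear_combination ω * hω3)] at h0
      have hent := Matrix.ext_iff.2 h0 0 1
      simp [E01, Matrix.smul_apply, smul_eq_mul] at hent
      exact hω1 hent
    · -- (1,0) : A = 1
      exfalso
      have h0 : A (E01 K) = E01 K := by rw [h]; rfl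
      rw [hAdef, A_E01] at h0
      have hent := Matrix.ext_iff.2 h0 0 1
      simp [E01, E12] at hent
    · -- (1,1) : A*B = 1
      exfalso
      have h0 : A (B (E01 K)) = E01 K := by
        rw [show A (B (E01 K)) = (A * B) (E01 K) from rfl, h]; rfl
      simp only [hAdef, hBdef, B_E01 hω3, map_smul, A_E01] at h0
      have hent := Matrix.ext_iff.2 h0 0 1
      simp [E01, E12, Matrix.smul_apply, smul_eq_mul] at hent
    · -- (1,2) : A*(B*B) = 1
      exfalso
      have h0 : A (B (B (E01 K))) = E01 K := by
        rw [show A (B (B (E01 K))) = (A * (B * B)) (E01 K) from rfl, h]; rfl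
      simp only [hAdef, hBdef, B_E01 hω3, map_smul, A_E01] at h0
      have hent := Matrix.ext_iff.2 h0 0 1
      simp [E01, E12, Matrix.smul_apply, smul_eq_mul] at hent
    · -- (2,0) : A*A = 1
      exfalso
      have h0 : A (A (E01 K)) = E01 K := by
        rw [show A (A (E01 K)) = (A * A) (E01 K) from rfl, h]; rfl
      simp only [hAdef, A_E01, A_E12] at h0
      have hent := Matrix.ext_iff.2 h0 0 1
      simp [E01, E20] at hent
    · -- (2,1) : A*A*B = 1
      exfalso
      have h0 : A (A (B (E01 K))) = E01 K := by
        rw [show A (A (B (E01 K))) = (A * A * B) (E01 K) from rfl, h]; rfl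
      simp only [hAdef, hBdef, B_E01 hω3, map_smul, A_E01, A_E12] at h0
      have hent := Matrix.ext_iff.2 h0 0 1
      simp [E01, E20, Matrix.smul_apply, smul_eq_mul] at hent
    · -- (2,2) : A*A*(B*B) = 1
      exfalso
      have h0 : A (A (B (B (E01 K)))) = E01 K := by
        rw [show A (A (B (B (E01 K)))) = (A * A * (B * B)) (E01 K) from rfl, h]; rfl
      simp only [hAdef, hBdef, B_E01 hω3, map_smul, A_E01, A_E12] at h0
      have hent := Matrix.ext_iff.2 h0 0 1
      simp [E01, E20, Matrix.smul_apply, smul_eq_mul] at hent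
  have key : ∀ a b : ZMod 3, A ^ a.val * B ^ b.val = 1 → a = 0 ∧ b = 0 := by
    intro a b h
    obtain ⟨h1, h2⟩ := key' a.val b.val a.val_lt b.val_lt h
    exact ⟨(ZMod.val_eq_zero a).mp h1, (ZMod.val_eq_zero b).mp h2⟩
  -- powers reduce mod 3
  have hApow : ∀ n : ℕ, A ^ (n % 3) = A ^ n := by
    intro n
    conv_rhs => rw [← Nat.div_add_mod n 3]
    rw [pow_add, pow_mul, hA3, one_pow, one_mul]
  have hBpow : ∀ n : ℕ, B ^ (n % 3) = B ^ n := by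
    intro n
    conv_rhs => rw [← Nat.div_add_mod n 3]
    rw [pow_add, pow_mul, hB3, one_pow, one_mul]
  -- the parameterization
  set φ : ZMod 3 × ZMod 3 → (Matrix (Fin 3) (Fin 3) K ≃ₗ[K] Matrix (Fin 3) (Fin 3) K) :=
    fun p => A ^ p.1.val * B ^ p.2.val with hφdef
  have hmul : ∀ p q : ZMod 3 × ZMod 3, φ p * φ q = φ (p + q) := by
    intro p q
    show A ^ p.1.val * B ^ p.2.val * (A ^ q.1.val * B ^ q.2.val) =
      A ^ (p.1 + q.1).val * B ^ (p.2 + q.2).val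
    rw [(hc.symm.pow_pow p.2.val q.1.val).mul_mul_mul_comm, ← pow_add, ← pow_add,
      ZMod.val_add, ZMod.val_add, hApow, hBpow]
  have hval0 : (0 : ZMod 3).val = 0 := ZMod.val_zero
  haveI : Fact (1 < 3) := ⟨by norm_num⟩
  have hval1 : (1 : ZMod 3).val = 1 := ZMod.val_one 3
  have hφ0 : φ (0, 0) = 1 := by
    show A ^ (0 : ZMod 3).val * B ^ (0 : ZMod 3).val = 1
    rw [hval0, pow_zero, pow_zero, one_mul]
  have hAmem : A ∈ H := Subgroup.subset_closure (Set.mem_insert _ _)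
  have hBmem : B ∈ H := Subgroup.subset_closure (Set.mem_insert_of_mem _ rfl)
  have hφmem : ∀ p, φ p ∈ H := fun p => mul_mem (pow_mem hAmem _) (pow_mem hBmem _)
  have hinj : Function.Injective φ := by
    intro p q hpq
    have h1 : φ (p + -q) = 1 := by
      rw [← hmul, hpq, hmul]
      simpa [Prod.mk_zero_zero] using hφ0
    obtain ⟨e1, e2⟩ := key (p.1 + -q.1) (p.2 + -q.2) h1
    have : p = q := by
      have f1 : p.1 = q.1 := by linear_combination (norm := ring_nf) e1
      have f2 : p.2 = q.2 := by linear_combination (norm := ring_nf) e2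
      exact Prod.ext f1 f2
    exact this
  have hsurj : ∀ x ∈ H, ∃ p, φ p = x := by
    intro x hx
    refine Subgroup.closure_induction ?_ ?_ ?_ ?_ hx
    · rintro y hy
      rcases Set.mem_insert_iff.mp hy with rfl | hy
      · exact ⟨(1, 0), by
          show A ^ (1 : ZMod 3).val * B ^ (0 : ZMod 3).val = _
          rw [hval0, hval1, pow_one, pow_zero, mul_one]⟩
      · rcases Set.mem_singleton_iff.mp hy with rfl
        exact ⟨(0, 1), by
          show A ^ (0 : ZMod 3).val * B ^ (1 : ZMod 3).val = _
          rw [hval0, hval1, pow_one, pow_zero, one_mul]⟩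
    · exact ⟨(0, 0), hφ0⟩
    · rintro y z _ _ ⟨p, rfl⟩ ⟨q, rfl⟩
      exact ⟨p + q, (hmul p q).symm⟩
    · rintro y _ ⟨p, rfl⟩
      refine ⟨-p, eq_inv_of_mul_eq_one_left ?_⟩
      rw [hmul]
      simpa [Prod.mk_zero_zero] using hφ0
  -- the bijection with ZMod 3 × ZMod 3
  have hcard : Nat.card H = 9 := by
    have hb : Function.Bijective (fun p : ZMod 3 × ZMod 3 => (⟨φ p, hφmem p⟩ : H)) := by
      constructor
      · intro p q hpq
        exact hinj (congrArg Subtype.val hpq)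
      · rintro ⟨x, hx⟩
        obtain ⟨p, hp⟩ := hsurj x hx
        exact ⟨p, Subtype.ext hp⟩
    rw [← Nat.card_eq_of_bijective _ hb]
    simp [Nat.card_eq_fintype_card]
  -- orders
  haveI : Fact (Nat.Prime 3) := ⟨by norm_num⟩
  have hAne : A ≠ 1 := by
    intro hA1
    have := (key' 1 0 (by norm_num) (by norm_num) (by
      rw [pow_one, pow_zero, mul_one, hA1])).1
    exact one_ne_zero this
  have hBne : B ≠ 1 := by
    intro hB1
    have := (key' 0 1 (by norm_num) (by norm_num) (by
      rw [pow_one, pow_zero, one_mul, hB1])).2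
    exact one_ne_zero this
  refine ⟨?_, hcard, orderOf_eq_prime hA3 hAne, orderOf_eq_prime hB3 hBne⟩
  -- commutativity
  intro a ha b hb
  obtain ⟨p, rfl⟩ := hsurj a ha
  obtain ⟨q, rfl⟩ := hsurj b hb
  rw [hmul, hmul, add_comm]
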